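/- Let G be a finitely generated free group and x ∈ G with x ≠ 1. Then there exists a normal subgroup H of G of finite index such that x ∉ H. -/

import Mathlib

open FreeGroup

namespace ResFinFree

open scoped Classical

variable {α : Type*}

def P (v : List (α × Bool)) (a : α) (b : Bool) (j : ℕ) : Prop :=
  v[j]? = some (a, b) ∨ ∃ k, j = k + 1 ∧ v[k]? = some (a, !b)

def Red' (v : List (α × Bool)) : Prop :=
  ∀ (j : ℕ) (a : α) (b : Bool), v[j]? = some (a, b) → v[j+1]? = some (a, !b) → False

noncomputable def step (v : List (α × Bool)) (a : α) (b : Bool)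
    (x : {j : Fin (v.length + 1) // P v a b j.val}) :
    {j : Fin (v.length + 1) // P v a (!b) j.val} :=
  if h : v[(x.1 : ℕ)]? = some (a, b) then
    ⟨⟨(x.1 : ℕ) + 1, by
        have := (List.getElem?_eq_some_iff.mp h).1; omega⟩,
      Or.inr ⟨(x.1 : ℕ), rfl, by simpa using h⟩⟩
  else
    ⟨⟨(x.1 : ℕ) - 1, by omega⟩, by
      obtain ⟨k, hk, hkv⟩ := x.2.resolve_left h
      refine Or.inl ?_
      show v[(x.1 : ℕ) - 1]? = some (a, !b)
      rw [hk]
      simpa using hkv⟩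

theorem step_step (v : List (α × Bool)) (hv : Red' v) (a : α) (b : Bool)
    (x : {j : Fin (v.length + 1) // P v a b j.val}) :
    (step v a (!b) (step v a b x)).1 = x.1 := by
  by_cases h : v[(x.1 : ℕ)]? = some (a, b)
  · have h1 : ¬ v[(x.1 : ℕ) + 1]? = some (a, !b) := fun hc => hv _ a b h hc
    simp only [step, dif_pos h]
    simp only [dif_neg (show ¬ _ from by simpa using h1)]
    ext; simp
  · obtain ⟨k, hk, hkv⟩ := x.2.resolve_left h
    simp only [step, dif_neg h]
    have hval : v[((⟨(x.1 : ℕ) - 1, by omega⟩ : Fin (v.length + 1)) : ℕ)]? = some (a, !b) := by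
      show v[(x.1 : ℕ) - 1]? = some (a, !b)
      rw [hk]; simpa using hkv
    simp only [dif_pos hval]
    ext; simp; omega

noncomputable def eqv (v : List (α × Bool)) (hv : Red' v) (a : α) :
    {j : Fin (v.length + 1) // P v a true j.val} ≃ {j : Fin (v.length + 1) // P v a false j.val} :=
  ⟨step v a true, step v a false,
    fun x => Subtype.ext (step_step v hv a true x),
    fun x => Subtype.ext (step_step v hv a false x)⟩

noncomputable def perm (v : List (α × Bool)) (hv : Red' v) (a : α) :
    Equiv.Perm (Fin (v.length + 1)) :=
  (eqv v hv a).extendSubtype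

theorem perm_apply_tt (v : List (α × Bool)) (hv : Red' v) (a : α) (j : ℕ)
    (h : v[j]? = some (a, true)) (hj : j < v.length + 1) (hj1 : j + 1 < v.length + 1) :
    perm v hv a ⟨j, hj⟩ = ⟨j + 1, hj1⟩ := by
  have hmem : P v a true ((⟨j, hj⟩ : Fin (v.length + 1)) : ℕ) := Or.inl h
  show (eqv v hv a).extendSubtype _ = _
  rw [Equiv.extendSubtype_apply_of_mem (eqv v hv a) (⟨j, hj⟩ : Fin (v.length + 1)) hmem]
  show ((step v a true ⟨⟨j, hj⟩, hmem⟩).1 : Fin (v.length + 1)) = _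
  simp only [step, dif_pos h]

theorem perm_apply_ff (v : List (α × Bool)) (hv : Red' v) (a : α) (j : ℕ)
    (h : v[j]? = some (a, false)) (hj : j < v.length + 1) (hj1 : j + 1 < v.length + 1) :
    perm v hv a ⟨j + 1, hj1⟩ = ⟨j, hj⟩ := by
  have hmem : P v a true ((⟨j + 1, hj1⟩ : Fin (v.length + 1)) : ℕ) :=
    Or.inr ⟨j, rfl, by simpa using h⟩
  show (eqv v hv a).extendSubtype _ = _
  rw [Equiv.extendSubtype_apply_of_mem (eqv v hv a) (⟨j + 1, hj1⟩ : Fin (v.length + 1)) hmem]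
  show ((step v a true ⟨⟨j + 1, hj1⟩, hmem⟩).1 : Fin (v.length + 1)) = _
  have hneg : ¬ v[j + 1]? = some (a, true) := fun hc => hv j a false h (by simpa using hc)
  simp only [step, dif_neg hneg]
  ext; simp

theorem main_calc (v : List (α × Bool)) (hv : Red' v) :
    ∀ (s t : List (α × Bool)), v = s.reverse ++ t →
      ∀ (h0 : (0 : ℕ) < v.length + 1) (hs : s.length < v.length + 1),
      FreeGroup.lift (perm v hv) (FreeGroup.mk s) ⟨0, h0⟩ = ⟨s.length, hs⟩ := by
  intro s
  induction s with
  | nil => intro t ht h0 hs; rw [FreeGroup.lift_mk]; simp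
  | cons hd tl ih =>
    intro t ht h0 hs
    obtain ⟨a, ε⟩ := hd
    have htl : v = tl.reverse ++ (a, ε) :: t := by simpa using ht
    have hlen : tl.length < v.length + 1 := by
      have := congrArg List.length htl
      simp at this
      omega
    have hget : v[tl.length]? = some (a, ε) := by
      rw [htl, List.getElem?_append_right (by simp)]
      simp
    have hmul : FreeGroup.lift (perm v hv) (FreeGroup.mk ((a, ε) :: tl)) =
        (cond ε (perm v hv a) (perm v hv a)⁻¹) * FreeGroup.lift (perm v hv) (FreeGroup.mk tl) := by
      rw [FreeGroup.lift_mk, FreeGroup.lift_mk, List.map_cons, List.prod_cons]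
    rw [hmul, Equiv.Perm.mul_apply, ih ((a, ε) :: t) htl h0 hlen]
    have hs1 : tl.length + 1 < v.length + 1 := by simpa using hs
    cases ε with
    | true =>
      simpa using perm_apply_tt v hv a tl.length hget hlen hs1
    | false =>
      have h2 := perm_apply_ff v hv a tl.length hget hlen hs1
      show (perm v hv a)⁻¹ ⟨tl.length, hlen⟩ = _
      rw [← h2]
      show (perm v hv a).symm ((perm v hv a) _) = _
      rw [Equiv.symm_apply_apply]
      simp

end ResFinFree

open ResFinFree

/-- Residual finiteness of finitely generated free groups: every nontrivial element lies
outside some finite-index normal subgroup. -/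
theorem stmt_11 {α : Type*} [Finite α] (x : FreeGroup α) (hx : x ≠ 1) :
    ∃ H : Subgroup (FreeGroup α), H.Normal ∧ H.FiniteIndex ∧ x ∉ H := by
  classical
  set w := x.toWord with hw
  set v := w.reverse with hvdef
  have hred : Red' v := by
    intro j a b h1 h2
    have hj1 : j + 1 < v.length := (List.getElem?_eq_some_iff.mp h2).1
    have hj : j < v.length := by omega
    have e1 : v[j] = (a, b) := by
      have := List.getElem?_eq_getElem hj; rw [h1] at this; exact (Option.some_inj.mp this).symm
    have e2 : v[j+1] = (a, !b) := by
      have := List.getElem?_eq_getElem hj1; rw [h2] at this; exact (Option.some_inj.mp this).symm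
    have hsplit : v = v.take j ++ (a, b) :: (a, !b) :: v.drop (j + 2) := by
      conv_lhs => rw [← List.take_append_drop j v,
        List.drop_eq_getElem_cons hj, List.drop_eq_getElem_cons hj1, e1, e2]
    have hwv : w = v.reverse := by simp [hvdef]
    have hwsplit : w = (v.drop (j + 2)).reverse ++ (a, !b) :: (a, !(!b)) :: (v.take j).reverse := by
      rw [hwv]
      conv_lhs => rw [hsplit]
      simp [Bool.not_not]
    have hred_w : FreeGroup.reduce w = w := FreeGroup.reduce_toWord x
    rw [hwsplit] at hred_w
    exact FreeGroup.reduce.not hred_w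
  set f : FreeGroup α →* Equiv.Perm (Fin (v.length + 1)) := FreeGroup.lift (perm v hred) with hf
  have hne : w ≠ [] := fun h => hx (FreeGroup.toWord_eq_nil_iff.mp h)
  have hlen : 0 < w.length := List.length_pos_iff.mpr hne
  have hvlen : v.length = w.length := by simp [hvdef]
  have h0 : (0 : ℕ) < v.length + 1 := by omega
  have hsl : w.length < v.length + 1 := by omega
  have hcalc : f (FreeGroup.mk w) ⟨0, h0⟩ = ⟨w.length, hsl⟩ :=
    main_calc v hred w [] (by simp [hvdef]) h0 hsl
  have hfx : f x ≠ 1 := by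
    rw [← FreeGroup.mk_toWord (x := x), ← hw]
    intro hcon
    rw [hcon] at hcalc
    simp only [Equiv.Perm.one_apply] at hcalc
    have : (0 : ℕ) = w.length := congrArg Fin.val hcalc
    omega
  refine ⟨f.ker, MonoidHom.normal_ker f, ?_, ?_⟩
  · exact Subgroup.finiteIndex_ker f
  · rw [MonoidHom.mem_ker]; exact hfx
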